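/- Let Σ ∪ {∅} be a metric space with distance d. For strings x, y ∈ Σⁿ, define the padded strings p(x) = ∅x₁∅x₂∅⋯xₙ∅ and p(y) similarly. Then dtw(p(x), p(y)) = ed(x, y), where ed is the edit distance with insertion/deletion cost d(∅, l) for letter l and substitution cost d(l, l'). -/

import Mathlib

open scoped BigOperators

variable {α : Type*}

/-- `xb` is the expansion of `x` obtained by replacing the `i`-th letter of `x`
with `ks[i] ≥ 1` consecutive copies of itself (equivalently, by extending runs). -/
def IsExpansionWith (x : List α) (ks : List ℕ) (xb : List α) : Prop :=
  ks.length = x.length ∧ (∀ k ∈ ks, 1 ≤ k) ∧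
    xb = (x.zip ks).flatMap fun p => List.replicate p.2 p.1

/-- `xb` is an expansion of `x` (obtained by extending runs). -/
def IsExpansion (x xb : List α) : Prop := ∃ ks, IsExpansionWith x ks xb

/-- The cost of a correspondence: sum of pointwise distances. -/
def corrCost (d : α → α → ℝ) (xb yb : List α) : ℝ :=
  ((xb.zip yb).map fun p => d p.1 p.2).sum

/-- A correspondence between `x` and `y`: a pair of equal-length expansions. -/
def IsCorrespondence (x y xb yb : List α) : Prop :=
  IsExpansion x xb ∧ IsExpansion y yb ∧ xb.length = yb.length

/-- Dynamic time warping distance: minimum cost of a correspondence. -/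
noncomputable def dtw (d : α → α → ℝ) (x y : List α) : ℝ :=
  sInf {c | ∃ xb yb, IsCorrespondence x y xb yb ∧ c = corrCost d xb yb}

/-- The maximal runs of equal letters of a list. -/
def runsOf [DecidableEq α] (x : List α) : List (List α) := x.splitBy (· == ·)

/-- Number of runs. -/
def numRuns [DecidableEq α] (x : List α) : ℕ := (runsOf x).length

/-- Length of the final run. -/
def lastRunLen [DecidableEq α] (x : List α) : ℕ := ((runsOf x).getLastD []).length

/-- Length of the `i`-th run (0-indexed). -/
def runLen [DecidableEq α] (x : List α) (i : ℕ) : ℕ := ((runsOf x).getD i []).length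

/-- The letter populating the `i`-th run (0-indexed). -/
def runLetter [DecidableEq α] [Inhabited α] (x : List α) (i : ℕ) : α :=
  ((runsOf x).getD i []).headI

/-- The concatenation of the first `k` runs of `x`. -/
def firstRuns [DecidableEq α] (k : ℕ) (x : List α) : List α := ((runsOf x).take k).flatten

/-- The prefix of `y` consisting of its first `ry` runs, up through the `oy`-th
letter of the `ry`-th run (runs are 1-indexed here). -/
def runPrefix [DecidableEq α] (ry oy : ℕ) (y : List α) : List α :=
  firstRuns (ry - 1) y ++ ((runsOf y).getD (ry - 1) []).take oy

/-- The subproblem `SP(x, y, rx, ry, oy)`: the minimum cost of a correspondence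
between the first `rx` runs of `x` and the prefix of `y` ending at the `oy`-th
letter of its `ry`-th run, under the constraint that the final (`ry`-th) run of
the `y`-prefix is not extended; `⊤` if no such correspondence exists. -/
noncomputable def SP [DecidableEq α] (d : α → α → ℝ) (x y : List α) (rx ry oy : ℕ) : EReal :=
  sInf ((fun p : List α × List α => ((corrCost d p.1 p.2 : ℝ) : EReal)) ''
    {p | IsCorrespondence (firstRuns rx x) (runPrefix ry oy y) p.1 p.2 ∧
         (0 < oy → lastRunLen p.2 = oy)})

/-- Generalized edit distance over a metric with null character `nul`:
insertion/deletion of `l` costs `d nul l`, substitution of `l` by `l'` costs `d l l'`. -/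
noncomputable def ged (d : α → α → ℝ) (nul : α) : List α → List α → ℝ
  | [], [] => 0
  | [], b :: ys => d nul b + ged d nul [] ys
  | a :: xs, [] => d nul a + ged d nul xs []
  | a :: xs, b :: ys =>
      min (d a b + ged d nul xs ys)
        (min (d nul a + ged d nul xs (b :: ys)) (d nul b + ged d nul (a :: xs) ys))
  termination_by x y => x.length + y.length

/-- Simple (Hamming/Levenshtein) edit distance: unit-cost insertions, deletions
and substitutions. -/
def edH [DecidableEq α] : List α → List α → ℕ
  | [], ys => ys.length
  | xs, [] => xs.length
  | a :: xs, b :: ys =>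
      min ((if a = b then 0 else 1) + edH xs ys)
        (min (1 + edH xs (b :: ys)) (1 + edH (a :: xs) ys))
  termination_by x y => x.length + y.length

/-- Simple edit distance with only unit-cost insertions and deletions. -/
def edS [DecidableEq α] : List α → List α → ℕ
  | [], ys => ys.length
  | xs, [] => xs.length
  | a :: xs, b :: ys =>
      if a = b then
        min (edS xs ys) (min (1 + edS xs (b :: ys)) (1 + edS (a :: xs) ys))
      else
        min (1 + edS xs (b :: ys)) (1 + edS (a :: xs) ys)
  termination_by x y => x.length + y.length

/-- The padded string `p(x) = ∅ x₁ ∅ x₂ ∅ ⋯ xₙ ∅`. -/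
def pad (nul : α) (x : List α) : List α := nul :: x.flatMap fun a => [a, nul]

/-- The `r`-simplification for edit distance: remove all letters of magnitude at most `r`. -/
noncomputable def sEd [MetricSpace α] (nul : α) (r : ℝ) (x : List α) : List α :=
  x.filter fun l => decide (r < dist nul l)

namespace DtwEd

/-! ### Basic expansion lemmas -/

lemma isExpansion_nil_iff {xb : List α} : IsExpansion ([] : List α) xb ↔ xb = [] := by
  constructor
  · rintro ⟨ks, h1, h2, rfl⟩
    simp
  · rintro rfl
    exact ⟨[], rfl, by simp, rfl⟩

lemma isExpansion_cons_one {a : α} {u xb : List α} (h : IsExpansion u xb) :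
    IsExpansion (a :: u) (a :: xb) := by
  obtain ⟨ks, hlen, hpos, rfl⟩ := h
  refine ⟨1 :: ks, by simp [hlen], ?_, by simp⟩
  intro k hk
  rcases List.mem_cons.1 hk with rfl | hk
  · exact le_rfl
  · exact hpos k hk

lemma isExpansion_repeat {a : α} {u xb : List α} (h : IsExpansion (a :: u) xb) :
    IsExpansion (a :: u) (a :: xb) := by
  obtain ⟨ks, hlen, hpos, rfl⟩ := h
  cases ks with
  | nil => simp at hlen
  | cons k ks' =>
    refine ⟨(k + 1) :: ks', by simpa using hlen, ?_, by simp [List.replicate_succ]⟩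
    intro m hm
    rcases List.mem_cons.1 hm with rfl | hm
    · omega
    · exact hpos m (List.mem_cons_of_mem _ hm)

lemma isExpansion_cons_elim {a : α} {u xb : List α} (h : IsExpansion (a :: u) xb) :
    ∃ xb2, xb = a :: xb2 ∧ (IsExpansion u xb2 ∨ IsExpansion (a :: u) xb2) := by
  obtain ⟨ks, hlen, hpos, hx⟩ := h
  cases ks with
  | nil => simp at hlen
  | cons k ks' =>
    have hk : 1 ≤ k := hpos k List.mem_cons_self
    have hlen' : ks'.length = u.length := by simpa using hlen
    have hpos' : ∀ m ∈ ks', 1 ≤ m := fun m hm => hpos m (List.mem_cons_of_mem _ hm)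
    have hx' : xb = List.replicate k a ++
        (u.zip ks').flatMap (fun p => List.replicate p.2 p.1) := by
      simpa using hx
    match k, hk, hx' with
    | 1, _, hx' =>
      refine ⟨(u.zip ks').flatMap (fun p => List.replicate p.2 p.1), by simpa using hx',
        Or.inl ⟨ks', hlen', hpos', rfl⟩⟩
    | (k' + 2), _, hx' =>
      refine ⟨List.replicate (k' + 1) a ++
          (u.zip ks').flatMap (fun p => List.replicate p.2 p.1), ?_,
        Or.inr ⟨(k' + 1) :: ks', by simpa using hlen, ?_, by simp⟩⟩
      · rw [hx']
        simp [List.replicate_succ]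
      · intro m hm
        rcases List.mem_cons.1 hm with rfl | hm
        · omega
        · exact hpos' m hm

lemma isExpansion_cons_ne_nil {a : α} {u : List α} (h : IsExpansion (a :: u) []) : False := by
  obtain ⟨xb2, h2, -⟩ := isExpansion_cons_elim h
  simp at h2

/-! ### corrCost lemmas -/

lemma corrCost_nil (d : α → α → ℝ) (yb : List α) : corrCost d [] yb = 0 := by
  simp [corrCost]

lemma corrCost_cons (d : α → α → ℝ) (a b : α) (xb yb : List α) :
    corrCost d (a :: xb) (b :: yb) = d a b + corrCost d xb yb := by
  simp [corrCost]

lemma corrCost_nonneg [MetricSpace α] (xb yb : List α) : 0 ≤ corrCost dist xb yb := by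
  apply List.sum_nonneg
  intro r hr
  obtain ⟨p, hp, rfl⟩ := List.mem_map.1 hr
  exact dist_nonneg

/-! ### pad lemmas -/

def Tpad (nul : α) : List α → List α
  | [] => []
  | a :: u => a :: pad nul u

lemma Tpad_nil (nul : α) : Tpad nul ([] : List α) = [] := rfl

lemma Tpad_cons (nul a : α) (u : List α) : Tpad nul (a :: u) = a :: pad nul u := rfl

lemma pad_nil (nul : α) : pad nul ([] : List α) = [nul] := rfl

lemma pad_cons (nul a : α) (u : List α) : pad nul (a :: u) = nul :: a :: pad nul u := by
  simp [pad]

lemma pad_eq (nul : α) (x : List α) : pad nul x = nul :: Tpad nul x := by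
  cases x <;> simp [pad, Tpad]

/-! ### ged lemmas -/

lemma ged_nil_nil (d : α → α → ℝ) (nul : α) : ged d nul [] [] = 0 := by
  simp [ged]

lemma ged_nil_cons (d : α → α → ℝ) (nul b : α) (ys : List α) :
    ged d nul [] (b :: ys) = d nul b + ged d nul [] ys := by
  simp [ged]

lemma ged_cons_nil (d : α → α → ℝ) (nul a : α) (xs : List α) :
    ged d nul (a :: xs) [] = d nul a + ged d nul xs [] := by
  simp [ged]

lemma ged_cons_cons (d : α → α → ℝ) (nul a b : α) (xs ys : List α) :
    ged d nul (a :: xs) (b :: ys) =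
      min (d a b + ged d nul xs ys)
        (min (d nul a + ged d nul xs (b :: ys)) (d nul b + ged d nul (a :: xs) ys)) := by
  rw [ged]

lemma ged_le_sub (d : α → α → ℝ) (nul a b : α) (xs ys : List α) :
    ged d nul (a :: xs) (b :: ys) ≤ d a b + ged d nul xs ys := by
  rw [ged_cons_cons]; exact min_le_left _ _

lemma ged_le_del (d : α → α → ℝ) (nul a : α) (xs y : List α) :
    ged d nul (a :: xs) y ≤ d nul a + ged d nul xs y := by
  cases y with
  | nil => rw [ged_cons_nil]
  | cons b ys => rw [ged_cons_cons]; exact le_trans (min_le_right _ _) (min_le_left _ _)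

lemma ged_le_ins (d : α → α → ℝ) (nul b : α) (x ys : List α) :
    ged d nul x (b :: ys) ≤ d nul b + ged d nul x ys := by
  cases x with
  | nil => rw [ged_nil_cons]
  | cons a xs => rw [ged_cons_cons]; exact le_trans (min_le_right _ _) (min_le_right _ _)

end DtwEd

namespace DtwEd

lemma lower_main [MetricSpace α] (nul : α) :
    ∀ N : ℕ, ∀ x y xb yb : List α, xb.length ≤ N → xb.length = yb.length →
      ((IsExpansion (pad nul x) xb → IsExpansion (pad nul y) yb →
          ged dist nul x y ≤ corrCost dist xb yb) ∧
       (IsExpansion (Tpad nul x) xb → IsExpansion (pad nul y) yb →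
          ged dist nul x y ≤ corrCost dist xb yb ∧
            ∀ a u, x = a :: u → ged dist nul u y ≤ corrCost dist xb yb) ∧
       (IsExpansion (pad nul x) xb → IsExpansion (Tpad nul y) yb →
          ged dist nul x y ≤ corrCost dist xb yb ∧
            ∀ b v, y = b :: v → ged dist nul x v ≤ corrCost dist xb yb) ∧
       (∀ a u b v, x = a :: u → y = b :: v →
          IsExpansion (Tpad nul x) xb → IsExpansion (Tpad nul y) yb →
          dist a b + ged dist nul u v ≤ corrCost dist xb yb)) := by
  intro N
  induction N with
  | zero =>
    intro x y xb yb hN hlen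
    have hxb : xb = [] := List.length_eq_zero_iff.1 (Nat.le_zero.1 hN)
    subst hxb
    have hyb : yb = [] := List.length_eq_zero_iff.1 hlen.symm
    subst hyb
    refine ⟨?_, ?_, ?_, ?_⟩
    · intro hex _
      rw [pad_eq] at hex
      exact absurd hex (fun h => isExpansion_cons_ne_nil h)
    · intro _ hey
      rw [pad_eq] at hey
      exact absurd hey (fun h => isExpansion_cons_ne_nil h)
    · intro hex _
      rw [pad_eq] at hex
      exact absurd hex (fun h => isExpansion_cons_ne_nil h)
    · intro a u b v hx hy hex _
      subst hx
      rw [Tpad_cons] at hex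
      exact absurd hex (fun h => isExpansion_cons_ne_nil h)
  | succ n IH =>
    intro x y xb yb hN hlen
    refine ⟨?_, ?_, ?_, ?_⟩
    -- P1 : (pad x, pad y)
    · intro hex hey
      rw [pad_eq] at hex hey
      obtain ⟨xb2, rfl, hx2⟩ := isExpansion_cons_elim hex
      obtain ⟨yb2, rfl, hy2⟩ := isExpansion_cons_elim hey
      have hlen2 : xb2.length = yb2.length := by simpa using hlen
      have hN2 : xb2.length ≤ n := by simpa using hN
      have hcost : corrCost dist (nul :: xb2) (nul :: yb2) = corrCost dist xb2 yb2 := by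
        rw [corrCost_cons, dist_self, zero_add]
      rw [hcost]
      rcases hx2 with h | h <;> rcases hy2 with h' | h'
      · -- (Tpad x, Tpad y)
        cases x with
        | nil =>
          rw [Tpad_nil] at h
          have : xb2 = [] := isExpansion_nil_iff.1 h
          subst this
          have : yb2 = [] := List.length_eq_zero_iff.1 hlen2.symm
          subst this
          cases y with
          | nil => rw [ged_nil_nil, corrCost_nil]
          | cons b v =>
            rw [Tpad_cons] at h'
            exact absurd h' (fun hh => isExpansion_cons_ne_nil hh)
        | cons a u =>
          cases y with
          | nil =>
            rw [Tpad_nil] at h'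
            have : yb2 = [] := isExpansion_nil_iff.1 h'
            subst this
            have : xb2 = [] := List.length_eq_zero_iff.1 hlen2
            subst this
            rw [Tpad_cons] at h
            exact absurd h (fun hh => isExpansion_cons_ne_nil hh)
          | cons b v =>
            have h4 := (IH (a :: u) (b :: v) xb2 yb2 hN2 hlen2).2.2.2 a u b v rfl rfl h h'
            exact le_trans (ged_le_sub _ _ _ _ _ _) h4
      · -- (Tpad x, pad y)
        rw [← pad_eq] at h'
        exact ((IH x y xb2 yb2 hN2 hlen2).2.1 h h').1
      · -- (pad x, Tpad y)
        rw [← pad_eq] at h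
        exact ((IH x y xb2 yb2 hN2 hlen2).2.2.1 h h').1
      · -- (pad x, pad y)
        rw [← pad_eq] at h h'
        exact (IH x y xb2 yb2 hN2 hlen2).1 h h'
    -- P2 : (Tpad x, pad y)
    · intro hex hey
      cases x with
      | nil =>
        exfalso
        rw [Tpad_nil] at hex
        have : xb = [] := isExpansion_nil_iff.1 hex
        subst this
        have : yb = [] := List.length_eq_zero_iff.1 hlen.symm
        subst this
        rw [pad_eq] at hey
        exact isExpansion_cons_ne_nil hey
      | cons a u =>
        rw [Tpad_cons] at hex
        obtain ⟨xb2, rfl, hx2⟩ := isExpansion_cons_elim hex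
        rw [pad_eq] at hey
        obtain ⟨yb2, rfl, hy2⟩ := isExpansion_cons_elim hey
        have hlen2 : xb2.length = yb2.length := by simpa using hlen
        have hN2 : xb2.length ≤ n := by simpa using hN
        have hcost : corrCost dist (a :: xb2) (nul :: yb2) =
            dist nul a + corrCost dist xb2 yb2 := by
          rw [corrCost_cons, dist_comm]
        rw [hcost]
        have key : ged dist nul u y ≤ corrCost dist xb2 yb2 ∨
            (∃ b v, y = b :: v ∧ dist a b + ged dist nul u v ≤ corrCost dist xb2 yb2) ∨
            ged dist nul (a :: u) y ≤ corrCost dist xb2 yb2 ∧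
              ged dist nul u y ≤ corrCost dist xb2 yb2 := by
          rcases hx2 with h | h <;> rcases hy2 with h' | h'
          · -- (pad u, Tpad y)
            exact Or.inl ((IH u y xb2 yb2 hN2 hlen2).2.2.1 h h').1
          · -- (pad u, pad y)
            rw [← pad_eq] at h'
            exact Or.inl ((IH u y xb2 yb2 hN2 hlen2).1 h h')
          · -- (Tpad (a::u), Tpad y)
            cases y with
            | nil =>
              exfalso
              rw [Tpad_nil] at h'
              have : yb2 = [] := isExpansion_nil_iff.1 h'
              subst this
              have : xb2 = [] := List.length_eq_zero_iff.1 hlen2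
              subst this
              exact isExpansion_cons_ne_nil h
            | cons b v =>
              exact Or.inr (Or.inl ⟨b, v, rfl,
                (IH (a :: u) (b :: v) xb2 yb2 hN2 hlen2).2.2.2 a u b v rfl rfl h h'⟩)
          · -- (Tpad (a::u), pad y)
            rw [← pad_eq] at h'
            have h5 := (IH (a :: u) y xb2 yb2 hN2 hlen2).2.1 h h'
            exact Or.inr (Or.inr ⟨h5.1, h5.2 a u rfl⟩)
        constructor
        · -- ged (a::u) y ≤ dist nul a + cost
          rcases key with hk | ⟨b, v, rfl, hk⟩ | ⟨hk, -⟩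
          · exact le_trans (ged_le_del _ _ _ _ _) (by linarith)
          · have : ged dist nul (a :: u) (b :: v) ≤ dist a b + ged dist nul u v :=
              ged_le_sub _ _ _ _ _ _
            have hd : (0:ℝ) ≤ dist nul a := dist_nonneg
            linarith
          · have hd : (0:ℝ) ≤ dist nul a := dist_nonneg
            linarith
        · rintro a' u' heq
          injection heq with h1 h2
          subst h1; subst h2
          rcases key with hk | ⟨b, v, rfl, hk⟩ | ⟨-, hk⟩
          · have hd : (0:ℝ) ≤ dist nul a := dist_nonneg
            linarith
          · have h1 : ged dist nul u (b :: v) ≤ dist nul b + ged dist nul u v :=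
              ged_le_ins _ _ _ _ _
            have h2 : dist nul b ≤ dist nul a + dist a b := dist_triangle nul a b
            linarith
          · have hd : (0:ℝ) ≤ dist nul a := dist_nonneg
            linarith
    -- P3 : (pad x, Tpad y)
    · intro hex hey
      cases y with
      | nil =>
        exfalso
        rw [Tpad_nil] at hey
        have : yb = [] := isExpansion_nil_iff.1 hey
        subst this
        have : xb = [] := List.length_eq_zero_iff.1 hlen
        subst this
        rw [pad_eq] at hex
        exact isExpansion_cons_ne_nil hex
      | cons b v =>
        rw [Tpad_cons] at hey
        obtain ⟨yb2, rfl, hy2⟩ := isExpansion_cons_elim hey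
        rw [pad_eq] at hex
        obtain ⟨xb2, rfl, hx2⟩ := isExpansion_cons_elim hex
        have hlen2 : xb2.length = yb2.length := by simpa using hlen
        have hN2 : xb2.length ≤ n := by simpa using hN
        have hcost : corrCost dist (nul :: xb2) (b :: yb2) =
            dist nul b + corrCost dist xb2 yb2 := by
          rw [corrCost_cons]
        rw [hcost]
        have key : ged dist nul x v ≤ corrCost dist xb2 yb2 ∨
            (∃ a u, x = a :: u ∧ dist a b + ged dist nul u v ≤ corrCost dist xb2 yb2) ∨
            ged dist nul x (b :: v) ≤ corrCost dist xb2 yb2 ∧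
              ged dist nul x v ≤ corrCost dist xb2 yb2 := by
          rcases hx2 with h | h <;> rcases hy2 with h' | h'
          · -- (Tpad x, pad v)
            exact Or.inl ((IH x v xb2 yb2 hN2 hlen2).2.1 h h').1
          · -- (Tpad x, Tpad (b::v))
            cases x with
            | nil =>
              exfalso
              rw [Tpad_nil] at h
              have : xb2 = [] := isExpansion_nil_iff.1 h
              subst this
              have : yb2 = [] := List.length_eq_zero_iff.1 hlen2.symm
              subst this
              exact isExpansion_cons_ne_nil h'
            | cons a u =>
              exact Or.inr (Or.inl ⟨a, u, rfl,
                (IH (a :: u) (b :: v) xb2 yb2 hN2 hlen2).2.2.2 a u b v rfl rfl h h'⟩)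
          · -- (pad x, pad v)
            rw [← pad_eq] at h
            exact Or.inl ((IH x v xb2 yb2 hN2 hlen2).1 h h')
          · -- (pad x, Tpad (b::v))
            rw [← pad_eq] at h
            have h5 := (IH x (b :: v) xb2 yb2 hN2 hlen2).2.2.1 h h'
            exact Or.inr (Or.inr ⟨h5.1, h5.2 b v rfl⟩)
        constructor
        · rcases key with hk | ⟨a, u, rfl, hk⟩ | ⟨hk, -⟩
          · exact le_trans (ged_le_ins _ _ _ _ _) (by linarith)
          · have : ged dist nul (a :: u) (b :: v) ≤ dist a b + ged dist nul u v :=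
              ged_le_sub _ _ _ _ _ _
            have hd : (0:ℝ) ≤ dist nul b := dist_nonneg
            linarith
          · have hd : (0:ℝ) ≤ dist nul b := dist_nonneg
            linarith
        · rintro b' v' heq
          injection heq with h1 h2
          subst h1; subst h2
          rcases key with hk | ⟨a, u, rfl, hk⟩ | ⟨-, hk⟩
          · have hd : (0:ℝ) ≤ dist nul b := dist_nonneg
            linarith
          · have h1 : ged dist nul (a :: u) v ≤ dist nul a + ged dist nul u v :=
              ged_le_del _ _ _ _ _
            have h2 : dist nul a ≤ dist nul b + dist b a := dist_triangle nul b a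
            have h3 : dist b a = dist a b := dist_comm b a
            linarith
          · have hd : (0:ℝ) ≤ dist nul b := dist_nonneg
            linarith
    -- P4 : (Tpad (a::u), Tpad (b::v))
    · rintro a u b v rfl rfl hex hey
      rw [Tpad_cons] at hex hey
      obtain ⟨xb2, rfl, hx2⟩ := isExpansion_cons_elim hex
      obtain ⟨yb2, rfl, hy2⟩ := isExpansion_cons_elim hey
      have hlen2 : xb2.length = yb2.length := by simpa using hlen
      have hN2 : xb2.length ≤ n := by simpa using hN
      rw [corrCost_cons]
      have key : ged dist nul u v ≤ corrCost dist xb2 yb2 := by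
        rcases hx2 with h | h <;> rcases hy2 with h' | h'
        · -- (pad u, pad v)
          exact (IH u v xb2 yb2 hN2 hlen2).1 h h'
        · -- (pad u, Tpad (b::v))
          exact ((IH u (b :: v) xb2 yb2 hN2 hlen2).2.2.1 h h').2 b v rfl
        · -- (Tpad (a::u), pad v)
          exact ((IH (a :: u) v xb2 yb2 hN2 hlen2).2.1 h h').2 a u rfl
        · -- (Tpad, Tpad)
          have h4 := (IH (a :: u) (b :: v) xb2 yb2 hN2 hlen2).2.2.2 a u b v rfl rfl h h'
          have hd : (0:ℝ) ≤ dist a b := dist_nonneg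
          linarith
      linarith

end DtwEd

namespace DtwEd

lemma upper [MetricSpace α] (nul : α) :
    ∀ N : ℕ, ∀ x y : List α, x.length + y.length ≤ N →
      ∃ xb yb, IsCorrespondence (pad nul x) (pad nul y) xb yb ∧
        corrCost dist xb yb ≤ ged dist nul x y := by
  intro N
  induction N with
  | zero =>
    intro x y h
    have hx : x = [] := List.length_eq_zero_iff.1 (by omega)
    have hy : y = [] := List.length_eq_zero_iff.1 (by omega)
    subst hx; subst hy
    refine ⟨[nul], [nul], ⟨?_, ?_, rfl⟩, ?_⟩
    · exact isExpansion_cons_one (isExpansion_nil_iff.2 rfl)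
    · exact isExpansion_cons_one (isExpansion_nil_iff.2 rfl)
    · rw [ged_nil_nil]
      simp [corrCost]
  | succ n IH =>
    intro x y h
    match x, y with
    | [], [] =>
      refine ⟨[nul], [nul], ⟨?_, ?_, rfl⟩, ?_⟩
      · exact isExpansion_cons_one (isExpansion_nil_iff.2 rfl)
      · exact isExpansion_cons_one (isExpansion_nil_iff.2 rfl)
      · rw [ged_nil_nil]
        simp [corrCost]
    | [], b :: ys =>
      obtain ⟨xb, yb, ⟨hxe, hye, hl⟩, hc⟩ := IH [] ys (by simp at h ⊢; omega)
      rw [pad_nil] at hxe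
      refine ⟨nul :: nul :: xb, nul :: b :: yb, ⟨?_, ?_, by simp [hl]⟩, ?_⟩
      · rw [pad_nil]
        exact isExpansion_repeat (isExpansion_repeat hxe)
      · rw [pad_cons]
        exact isExpansion_cons_one (isExpansion_cons_one hye)
      · rw [ged_nil_cons, corrCost_cons, corrCost_cons, dist_self]
        linarith
    | a :: xs, [] =>
      obtain ⟨xb, yb, ⟨hxe, hye, hl⟩, hc⟩ := IH xs [] (by simp at h ⊢; omega)
      rw [pad_nil] at hye
      refine ⟨nul :: a :: xb, nul :: nul :: yb, ⟨?_, ?_, by simp [hl]⟩, ?_⟩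
      · rw [pad_cons]
        exact isExpansion_cons_one (isExpansion_cons_one hxe)
      · rw [pad_nil]
        exact isExpansion_repeat (isExpansion_repeat hye)
      · rw [ged_cons_nil, corrCost_cons, corrCost_cons, dist_self, dist_comm]
        linarith
    | a :: xs, b :: ys =>
      have hs : xs.length + ys.length ≤ n := by simp at h ⊢; omega
      have hs2 : xs.length + (b :: ys).length ≤ n := by simp at h ⊢; omega
      have hs3 : (a :: xs).length + ys.length ≤ n := by simp at h ⊢; omega
      rw [ged_cons_cons]
      rcases le_total (dist a b + ged dist nul xs ys)
        (min (dist nul a + ged dist nul xs (b :: ys))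
          (dist nul b + ged dist nul (a :: xs) ys)) with hm | hm
      · obtain ⟨xb, yb, ⟨hxe, hye, hl⟩, hc⟩ := IH xs ys hs
        refine ⟨nul :: a :: xb, nul :: b :: yb, ⟨?_, ?_, by simp [hl]⟩, ?_⟩
        · rw [pad_cons]
          exact isExpansion_cons_one (isExpansion_cons_one hxe)
        · rw [pad_cons]
          exact isExpansion_cons_one (isExpansion_cons_one hye)
        · rw [min_eq_left hm, corrCost_cons, corrCost_cons, dist_self]
          linarith
      · rw [min_eq_right hm]
        rcases le_total (dist nul a + ged dist nul xs (b :: ys))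
          (dist nul b + ged dist nul (a :: xs) ys) with hm2 | hm2
        · obtain ⟨xb, yb, ⟨hxe, hye, hl⟩, hc⟩ := IH xs (b :: ys) hs2
          rw [pad_cons] at hye
          refine ⟨nul :: a :: xb, nul :: nul :: yb, ⟨?_, ?_, by simp [hl]⟩, ?_⟩
          · rw [pad_cons]
            exact isExpansion_cons_one (isExpansion_cons_one hxe)
          · rw [pad_cons]
            exact isExpansion_repeat (isExpansion_repeat hye)
          · rw [min_eq_left hm2, corrCost_cons, corrCost_cons, dist_self, dist_comm]
            linarith
        · obtain ⟨xb, yb, ⟨hxe, hye, hl⟩, hc⟩ := IH (a :: xs) ys hs3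
          rw [pad_cons] at hxe
          refine ⟨nul :: nul :: xb, nul :: b :: yb, ⟨?_, ?_, by simp [hl]⟩, ?_⟩
          · rw [pad_cons]
            exact isExpansion_repeat (isExpansion_repeat hxe)
          · rw [pad_cons]
            exact isExpansion_cons_one (isExpansion_cons_one hye)
          · rw [min_eq_right hm2, corrCost_cons, corrCost_cons, dist_self]
            linarith

end DtwEd

/-- `dtw(p(x), p(y)) = ed(x, y)` for the padded strings over a metric with null
character `nul`. -/
theorem stmt3 [MetricSpace α] (nul : α) (n : ℕ) (x y : List α)
    (hx : x.length = n) (hy : y.length = n)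
    (hxn : ∀ l ∈ x, l ≠ nul) (hyn : ∀ l ∈ y, l ≠ nul) :
    dtw dist (pad nul x) (pad nul y) = ged dist nul x y := by
  obtain ⟨xb0, yb0, hcorr0, hle0⟩ := DtwEd.upper nul (x.length + y.length) x y le_rfl
  have hbdd : BddBelow {c | ∃ xb yb, IsCorrespondence (pad nul x) (pad nul y) xb yb ∧
      c = corrCost dist xb yb} := by
    refine ⟨0, ?_⟩
    rintro c ⟨xb, yb, -, rfl⟩
    exact DtwEd.corrCost_nonneg xb yb
  unfold dtw
  apply le_antisymm
  · refine csInf_le_of_le hbdd ?_ hle0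
    exact ⟨xb0, yb0, hcorr0, rfl⟩
  · refine le_csInf ⟨_, xb0, yb0, hcorr0, rfl⟩ ?_
    rintro c ⟨xb, yb, ⟨hex, hey, hlen⟩, rfl⟩
    exact (DtwEd.lower_main nul xb.length x y xb yb le_rfl hlen).1 hex hey
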